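/- arXiv:2411.10975 — 3 statements merged into one kernel-verified Lean document; each statement's English description precedes it below -/
import Mathlib

section
/- Let ε > 0 be small and consider the weight W(τ,τ₁,ξ,ξ₁) = χ_{|ξ| ≫ ⟨ξ₁⟩} |ξ|^{1/2+6ε} / (⟨τ₁+ξ₁²⟩^{1/2+ε}⟨τ-τ₁-(ξ-ξ₁)³⟩^{1/2+ε}). Then sup_{τ,ξ} ‖W(τ,τ₁,ξ,ξ₁)‖_{L²_{τ₁,ξ₁}} ≲ 1. The proof integrates first in τ₁ to reduce to sup_{τ,ξ} ‖χ_{|ξ|≫⟨ξ₁⟩}|ξ|^{1/2+6ε}⟨τ+ξ₁²-(ξ-ξ₁)³⟩^{-1/2-ε}‖_{L²_{ξ₁}}, then changes variables y = τ+ξ₁²-(ξ-ξ₁)³, for which |dy| ∼ |ξ|²|dξ₁| when |ξ| ≫ ⟨ξ₁⟩, yielding the bound |ξ|^{1/2+6ε}·|ξ|^{-1}·‖⟨y⟩^{-1/2-ε}‖_{L²} ≲ 1. -/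
open MeasureTheory Set

noncomputable section

def jap (x : ℝ) : ℝ := Real.sqrt (1 + x ^ 2)

lemma one_le_jap (x : ℝ) : 1 ≤ jap x := by
  have h := Real.sqrt_le_sqrt (show (1:ℝ) ≤ 1 + x ^ 2 by nlinarith [sq_nonneg x])
  simpa [jap] using h

lemma jap_pos (x : ℝ) : 0 < jap x := lt_of_lt_of_le one_pos (one_le_jap x)

lemma jap_nonneg (x : ℝ) : 0 ≤ jap x := (jap_pos x).le

lemma abs_le_jap (x : ℝ) : |x| ≤ jap x := by
  rw [jap, ← Real.sqrt_sq_eq_abs]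
  exact Real.sqrt_le_sqrt (by nlinarith)

lemma jap_mono {x y : ℝ} (h : |x| ≤ |y|) : jap x ≤ jap y := by
  apply Real.sqrt_le_sqrt
  have hx := sq_abs x; have hy := sq_abs y
  nlinarith [abs_nonneg x, abs_nonneg y]

lemma jap_continuous : Continuous jap :=
  Real.continuous_sqrt.comp (by continuity)

lemma jap_rpow_eq (q x : ℝ) : jap x ^ q = (1 + x ^ 2) ^ (q / 2) := by
  rw [jap, Real.sqrt_eq_rpow, ← Real.rpow_mul (by nlinarith [sq_nonneg x])]
  ring_nf

lemma one_le_jap_rpow {q : ℝ} (hq : 0 ≤ q) (x : ℝ) : 1 ≤ jap x ^ q :=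
  Real.one_le_rpow (one_le_jap x) hq

lemma jap_rpow_pos (q : ℝ) (x : ℝ) : 0 < jap x ^ q :=
  Real.rpow_pos_of_pos (jap_pos x) q

lemma integrable_jap_rpow {q : ℝ} (hq : 1 < q) :
    Integrable fun x : ℝ => (jap x ^ q)⁻¹ := by
  have h := integrable_rpow_neg_one_add_norm_sq (E := ℝ) (μ := volume)
    (r := q) (by simpa using hq)
  refine h.congr (ae_of_all _ fun x => ?_)
  simp only [Real.norm_eq_abs, sq_abs]
  rw [jap_rpow_eq, ← Real.rpow_neg (by nlinarith [sq_nonneg x]), neg_div]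

example (a : ℝ) (f : ℝ → ℝ) : (∫ x : ℝ, f (x + a)) = ∫ x, f x :=
  integral_add_right_eq_self f a

example (a : ℝ) (f : ℝ → ℝ) : (∫ x : ℝ, f (a - x)) = ∫ x, f x :=
  integral_sub_left_eq_self f _ a

lemma sqrt_four : Real.sqrt 4 = 2 := by
  rw [show (4:ℝ) = 2 ^ 2 by norm_num, Real.sqrt_sq (by norm_num)]

lemma jap_two_mul (v : ℝ) : jap (2 * v) ≤ 2 * jap v := by
  have h : 2 * jap v = Real.sqrt (4 * (1 + v ^ 2)) := by
    rw [jap, Real.sqrt_mul (by norm_num), sqrt_four]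
  rw [h, jap]
  exact Real.sqrt_le_sqrt (by nlinarith)

lemma jap_add_le (u v : ℝ) : jap (u + v) ≤ 2 * max (jap u) (jap v) := by
  rcases le_total |u| |v| with h | h
  · have h1 : jap (u + v) ≤ jap (2 * v) :=
      jap_mono (by rw [abs_mul]; calc |u + v| ≤ |u| + |v| := abs_add_le u v
        _ ≤ |2| * |v| := by rw [abs_two]; linarith)
    exact h1.trans ((jap_two_mul v).trans (by have := le_max_right (jap u) (jap v); linarith))
  · have h1 : jap (u + v) ≤ jap (2 * u) :=
      jap_mono (by rw [abs_mul]; calc |u + v| ≤ |u| + |v| := abs_add_le u v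
        _ ≤ |2| * |u| := by rw [abs_two]; linarith)
    exact h1.trans ((jap_two_mul u).trans (by have := le_max_left (jap u) (jap v); linarith))

lemma two_rpow_le_four {q : ℝ} (hq2 : q ≤ 2) : (2:ℝ) ^ q ≤ 4 := by
  have := Real.rpow_le_rpow_of_exponent_le (by norm_num : (1:ℝ) ≤ 2) hq2
  have h2 : (2:ℝ) ^ (2:ℝ) = 4 := by
    rw [show (2:ℝ) = ((2:ℕ):ℝ) from by norm_num, Real.rpow_natCast]; norm_num
  linarith

lemma conv_pointwise {q : ℝ} (hq0 : 0 ≤ q) (hq2 : q ≤ 2) (u v : ℝ) :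
    (jap u ^ q * jap v ^ q)⁻¹ ≤
      4 * (jap (u + v) ^ q)⁻¹ * ((jap u ^ q)⁻¹ + (jap v ^ q)⁻¹) := by
  have key : ∀ w z : ℝ, jap z ≤ jap w →
      (jap w ^ q * jap z ^ q)⁻¹ ≤ 4 * (jap (w + z) ^ q)⁻¹ * (jap z ^ q)⁻¹ := by
    intro w z hzw
    have h1 : jap (w + z) ≤ 2 * jap w := by
      have := jap_add_le w z
      rw [max_eq_left hzw] at this; exact this
    have h2 : jap (w + z) ^ q ≤ 4 * jap w ^ q := by
      calc jap (w + z) ^ q ≤ (2 * jap w) ^ q :=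
            Real.rpow_le_rpow (jap_nonneg _) h1 hq0
        _ = 2 ^ q * jap w ^ q := Real.mul_rpow (by norm_num) (jap_nonneg _)
        _ ≤ 4 * jap w ^ q := by
            have := two_rpow_le_four hq2
            nlinarith [jap_rpow_pos q w]
    have hw := jap_rpow_pos q w
    have hz := jap_rpow_pos q z
    have hwz := jap_rpow_pos q (w + z)
    rw [mul_inv]
    have h3 : (jap w ^ q)⁻¹ ≤ 4 * (jap (w + z) ^ q)⁻¹ := by
      rw [show (4:ℝ) * (jap (w + z) ^ q)⁻¹ = (jap (w + z) ^ q / 4)⁻¹ by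
        rw [div_eq_mul_inv, mul_inv, inv_inv]; ring]
      exact inv_anti₀ (by have := jap_rpow_pos q (w + z); linarith) (by linarith)
    calc (jap w ^ q)⁻¹ * (jap z ^ q)⁻¹
        ≤ 4 * (jap (w + z) ^ q)⁻¹ * (jap z ^ q)⁻¹ :=
          mul_le_mul_of_nonneg_right h3 (inv_nonneg.mpr hz.le)
      _ = 4 * (jap (w + z) ^ q)⁻¹ * (jap z ^ q)⁻¹ := by ring
  rcases le_total (jap v) (jap u) with h | h
  · refine (key u v h).trans ?_
    exact mul_le_mul_of_nonneg_left
      (le_add_of_nonneg_left (inv_nonneg.mpr (jap_rpow_pos q u).le))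
      (by have := inv_nonneg.mpr (jap_rpow_pos q (u + v)).le; linarith)
  · have hk := key v u h
    rw [mul_comm (jap v ^ q) (jap u ^ q), add_comm v u] at hk
    refine hk.trans ?_
    exact mul_le_mul_of_nonneg_left
      (le_add_of_nonneg_right (inv_nonneg.mpr (jap_rpow_pos q v).le))
      (by have := inv_nonneg.mpr (jap_rpow_pos q (u + v)).le; linarith)

lemma conv_integral {q : ℝ} (hq : 1 < q) (hq2 : q ≤ 2) (a c : ℝ) :
    (∫ t : ℝ, (jap (t + a) ^ q * jap (c - t) ^ q)⁻¹) ≤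
      8 * (∫ t : ℝ, (jap t ^ q)⁻¹) * (jap (a + c) ^ q)⁻¹ := by
  have hInt : Integrable fun x : ℝ => (jap x ^ q)⁻¹ := integrable_jap_rpow hq
  have h1 : Integrable fun t : ℝ => (jap (t + a) ^ q)⁻¹ := hInt.comp_add_right a
  have h2 : Integrable fun t : ℝ => (jap (c - t) ^ q)⁻¹ := hInt.comp_sub_left c
  have hmaj : Integrable fun t : ℝ =>
      4 * (jap (a + c) ^ q)⁻¹ * ((jap (t + a) ^ q)⁻¹ + (jap (c - t) ^ q)⁻¹) :=
    (h1.add h2).const_mul _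
  have hle : (∫ t : ℝ, (jap (t + a) ^ q * jap (c - t) ^ q)⁻¹) ≤
      ∫ t : ℝ, 4 * (jap (a + c) ^ q)⁻¹ * ((jap (t + a) ^ q)⁻¹ + (jap (c - t) ^ q)⁻¹) := by
    refine integral_mono_of_nonneg (ae_of_all _ fun t =>
      inv_nonneg.mpr (mul_nonneg (jap_rpow_pos q _).le (jap_rpow_pos q _).le)) hmaj
      (ae_of_all _ fun t => ?_)
    have := conv_pointwise (by linarith : (0:ℝ) ≤ q) hq2 (t + a) (c - t)
    rwa [show t + a + (c - t) = a + c by ring] at this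
  refine hle.trans (le_of_eq ?_)
  rw [integral_const_mul, integral_add h1 h2]
  have e1 : (∫ t : ℝ, (jap (t + a) ^ q)⁻¹) = ∫ t : ℝ, (jap t ^ q)⁻¹ :=
    integral_add_right_eq_self (fun t => (jap t ^ q)⁻¹) a
  have e2 : (∫ t : ℝ, (jap (c - t) ^ q)⁻¹) = ∫ t : ℝ, (jap t ^ q)⁻¹ :=
    integral_sub_left_eq_self (fun t => (jap t ^ q)⁻¹) _ c
  rw [e1, e2]; ring

lemma cont_g (q : ℝ) : Continuous fun y : ℝ => (jap y ^ q)⁻¹ := by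
  refine Continuous.inv₀ ?_ fun y => (jap_rpow_pos q y).ne'
  exact jap_continuous.rpow_const fun y => Or.inl (jap_pos y).ne'

lemma subst_bound {q : ℝ} (hq : 1 < q) (τ ξ : ℝ) (hξ : 4 ≤ |ξ|) :
    (∫ x in Icc (-(|ξ|/4)) (|ξ|/4), (jap (τ + x ^ 2 - (ξ - x) ^ 3) ^ q)⁻¹) ≤
      (ξ ^ 2)⁻¹ * ∫ t : ℝ, (jap t ^ q)⁻¹ := by
  set r := |ξ| / 4 with hr
  set φ : ℝ → ℝ := fun x => τ + x ^ 2 - (ξ - x) ^ 3 with hφ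
  set φ' : ℝ → ℝ := fun x => 2 * x + 3 * (ξ - x) ^ 2 with hφ'
  set g : ℝ → ℝ := fun y => (jap y ^ q)⁻¹ with hgdef
  have hg : Continuous g := cont_g q
  have hφ'c : Continuous φ' := by fun_prop
  have hderiv : ∀ x ∈ uIcc (-r) r, HasDerivAt φ (φ' x) x := by
    intro x _
    have h1 := ((hasDerivAt_pow 2 x).const_add τ).sub
      (((hasDerivAt_id x).const_sub ξ).pow 3)
    refine h1.congr_deriv ?_
    simp [hφ']
  have hxpos : (0:ℝ) < ξ ^ 2 := by nlinarith [sq_abs ξ]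
  have hbnd : ∀ x ∈ Icc (-r) r, g (φ x) ≤ (ξ ^ 2)⁻¹ * (φ' x * g (φ x)) := by
    intro x hx
    have hx1 : |x| ≤ r := abs_le.mpr ⟨hx.1, hx.2⟩
    have habs : |ξ| - |x| ≤ |ξ - x| := abs_sub_abs_le_abs_sub ξ x
    have h34 : 3 * |ξ| / 4 ≤ |ξ - x| := by rw [hr] at hx1; linarith
    have hsq : (3 * |ξ| / 4) ^ 2 ≤ (ξ - x) ^ 2 := by
      rw [← sq_abs (ξ - x)]
      exact pow_le_pow_left₀ (by linarith) h34 2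
    have hd : ξ ^ 2 ≤ φ' x := by
      simp only [hφ']
      nlinarith [sq_abs ξ, abs_nonneg x, neg_abs_le x]
    have hg0 : 0 ≤ g (φ x) := inv_nonneg.mpr (jap_rpow_pos q _).le
    have h5 : 1 ≤ φ' x / ξ ^ 2 := (one_le_div hxpos).mpr hd
    rw [← mul_assoc, inv_mul_eq_div]
    nlinarith [h5, hg0]
  have hφc : Continuous φ := by rw [hφ]; fun_prop
  have hIccInt1 : IntegrableOn (fun x => g (φ x)) (Icc (-r) r) :=
    (hg.comp hφc).integrableOn_Icc
  have hIccInt2 : IntegrableOn (fun x => (ξ ^ 2)⁻¹ * (φ' x * g (φ x))) (Icc (-r) r) :=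
    (continuous_const.mul (hφ'c.mul (hg.comp hφc))).integrableOn_Icc
  have step1 := setIntegral_mono_on hIccInt1 hIccInt2 measurableSet_Icc hbnd
  refine step1.trans ?_
  rw [integral_const_mul]
  refine mul_le_mul_of_nonneg_left ?_ (inv_nonneg.mpr hxpos.le)
  have h0r : 0 ≤ r := by rw [hr]; positivity
  have hrr : -r ≤ r := by linarith
  have e1 : (∫ x in Icc (-r) r, φ' x * g (φ x)) = ∫ x in (-r)..r, φ' x • (g ∘ φ) x := by
    rw [intervalIntegral.integral_of_le hrr, integral_Icc_eq_integral_Ioc]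
    rfl
  rw [e1, intervalIntegral.integral_comp_smul_deriv hderiv hφ'c.continuousOn hg]
  rcases le_total (φ (-r)) (φ r) with h | h
  · rw [intervalIntegral.integral_of_le h]
    refine setIntegral_le_integral (integrable_jap_rpow hq) (ae_of_all _ fun y => ?_)
    exact inv_nonneg.mpr (jap_rpow_pos q y).le
  · rw [intervalIntegral.integral_of_ge h]
    have h0 : 0 ≤ ∫ t : ℝ, g t := integral_nonneg fun y => inv_nonneg.mpr (jap_rpow_pos q y).le
    have h1 : 0 ≤ ∫ y in Ioc (φ r) (φ (-r)), g y :=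
      setIntegral_nonneg measurableSet_Ioc fun y _ => inv_nonneg.mpr (jap_rpow_pos q y).le
    linarith

/-- Cauchy–Schwarz kernel bound: for small `ε > 0`, uniformly in `(τ, ξ)`,
`‖χ_{|ξ| ≫ ⟨ξ₁⟩} |ξ|^{1/2+6ε} ⟨τ₁+ξ₁²⟩^{-1/2-ε} ⟨τ-τ₁-(ξ-ξ₁)³⟩^{-1/2-ε}‖²_{L²_{τ₁,ξ₁}} ≤ C`. -/
theorem weight_kernel_l2_bound (ε : ℝ) (hε : 0 < ε) (hε' : ε ≤ 1/12) :
    ∃ C : ℝ, 0 < C ∧ ∀ τ ξ : ℝ,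
      (∫ ξ₁ : ℝ, ∫ τ₁ : ℝ,
        (if 4 * jap ξ₁ ≤ |ξ| then
          |ξ| ^ (1/2 + 6 * ε) /
            (jap (τ₁ + ξ₁ ^ 2) ^ (1/2 + ε) * jap (τ - τ₁ - (ξ - ξ₁) ^ 3) ^ (1/2 + ε))
        else 0) ^ 2) ≤ C := by
  set q : ℝ := 1 + 2 * ε with hqdef
  have hq1 : 1 < q := by rw [hqdef]; linarith
  have hq2 : q ≤ 2 := by rw [hqdef]; linarith
  set I : ℝ := ∫ t : ℝ, (jap t ^ q)⁻¹ with hIdef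
  have hI0 : 0 ≤ I := integral_nonneg fun y => inv_nonneg.mpr (jap_rpow_pos q y).le
  refine ⟨8 * I * I + 1, by positivity, fun τ ξ => ?_⟩
  set p2 : ℝ := 1 + 12 * ε with hp2
  set h : ℝ → ℝ := fun ξ₁ =>
    8 * I * |ξ| ^ p2 * (jap (τ + ξ₁ ^ 2 - (ξ - ξ₁) ^ 3) ^ q)⁻¹ with hhdef
  set K : ℝ → ℝ := fun ξ₁ => if 4 * jap ξ₁ ≤ |ξ| then h ξ₁ else 0 with hK
  have hrp := Real.rpow_nonneg (abs_nonneg ξ) p2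
  have claim1 : ∀ ξ₁ : ℝ,
      (∫ τ₁ : ℝ,
        (if 4 * jap ξ₁ ≤ |ξ| then
          |ξ| ^ (1/2 + 6 * ε) /
            (jap (τ₁ + ξ₁ ^ 2) ^ (1/2 + ε) * jap (τ - τ₁ - (ξ - ξ₁) ^ 3) ^ (1/2 + ε))
        else 0) ^ 2) ≤ K ξ₁ := by
    intro ξ₁
    by_cases hcond : 4 * jap ξ₁ ≤ |ξ|
    · have hrw : ∀ τ₁ : ℝ,
          (if 4 * jap ξ₁ ≤ |ξ| then
            |ξ| ^ (1/2 + 6 * ε) /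
              (jap (τ₁ + ξ₁ ^ 2) ^ (1/2 + ε) * jap (τ - τ₁ - (ξ - ξ₁) ^ 3) ^ (1/2 + ε))
          else 0) ^ 2
          = |ξ| ^ p2 *
            (jap (τ₁ + ξ₁ ^ 2) ^ q * jap ((τ - (ξ - ξ₁) ^ 3) - τ₁) ^ q)⁻¹ := by
        intro τ₁
        rw [if_pos hcond, div_pow, mul_pow,
          show τ - τ₁ - (ξ - ξ₁) ^ 3 = (τ - (ξ - ξ₁) ^ 3) - τ₁ by ring,
          ← Real.rpow_natCast (|ξ| ^ (1/2 + 6 * ε)) 2,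
          ← Real.rpow_natCast (jap (τ₁ + ξ₁ ^ 2) ^ (1/2 + ε)) 2,
          ← Real.rpow_natCast (jap ((τ - (ξ - ξ₁) ^ 3) - τ₁) ^ (1/2 + ε)) 2,
          ← Real.rpow_mul (abs_nonneg ξ), ← Real.rpow_mul (jap_nonneg _),
          ← Real.rpow_mul (jap_nonneg _)]
        norm_num
        rw [show (1/2 + 6 * ε) * 2 = p2 by rw [hp2]; ring,
          show (1/2 + ε) * 2 = q by rw [hqdef]; ring, div_eq_mul_inv, mul_inv]
        ring
      calc (∫ τ₁ : ℝ,
          (if 4 * jap ξ₁ ≤ |ξ| then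
            |ξ| ^ (1/2 + 6 * ε) /
              (jap (τ₁ + ξ₁ ^ 2) ^ (1/2 + ε) * jap (τ - τ₁ - (ξ - ξ₁) ^ 3) ^ (1/2 + ε))
          else 0) ^ 2)
          = ∫ τ₁ : ℝ, |ξ| ^ p2 *
              (jap (τ₁ + ξ₁ ^ 2) ^ q * jap ((τ - (ξ - ξ₁) ^ 3) - τ₁) ^ q)⁻¹ := by
            exact integral_congr_ae (ae_of_all _ hrw)
        _ = |ξ| ^ p2 * ∫ τ₁ : ℝ,
              (jap (τ₁ + ξ₁ ^ 2) ^ q * jap ((τ - (ξ - ξ₁) ^ 3) - τ₁) ^ q)⁻¹ :=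
            integral_const_mul _ _
        _ ≤ |ξ| ^ p2 * (8 * I * (jap (ξ₁ ^ 2 + (τ - (ξ - ξ₁) ^ 3)) ^ q)⁻¹) :=
            mul_le_mul_of_nonneg_left (conv_integral hq1 hq2 _ _) hrp
        _ = K ξ₁ := by
            simp only [hK, hhdef]
            rw [if_pos hcond,
              show ξ₁ ^ 2 + (τ - (ξ - ξ₁) ^ 3) = τ + ξ₁ ^ 2 - (ξ - ξ₁) ^ 3 by ring]
            ring
    · simp only [hK, if_neg hcond]
      simp
  have hScl : IsClosed {x : ℝ | 4 * jap x ≤ |ξ|} :=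
    isClosed_le (continuous_const.mul jap_continuous) continuous_const
  have hS : MeasurableSet {x : ℝ | 4 * jap x ≤ |ξ|} := hScl.measurableSet
  have hKeq : K = Set.indicator {x : ℝ | 4 * jap x ≤ |ξ|} h := by
    funext x
    rw [hK, Set.indicator_apply]
    simp [Set.mem_setOf_eq]
  have hsub : {x : ℝ | 4 * jap x ≤ |ξ|} ⊆ Icc (-(|ξ|/4)) (|ξ|/4) := by
    intro x hx
    simp only [Set.mem_setOf_eq] at hx
    have h1 := abs_le_jap x
    have h2 : |x| ≤ |ξ|/4 := by linarith
    exact mem_Icc.mpr (abs_le.mp h2)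
  have hh_cont : Continuous h := by
    rw [hhdef]
    exact continuous_const.mul ((cont_g q).comp (by fun_prop))
  have hh_nonneg : ∀ x, 0 ≤ h x := by
    intro x
    rw [hhdef]
    exact mul_nonneg (mul_nonneg (by positivity) hrp)
      (inv_nonneg.mpr (jap_rpow_pos q _).le)
  have hKint : Integrable K := by
    rw [hKeq]
    exact ((hh_cont.integrableOn_Icc).mono_set hsub).integrable_indicator hS
  have step2 : (∫ ξ₁ : ℝ, ∫ τ₁ : ℝ,
      (if 4 * jap ξ₁ ≤ |ξ| then
        |ξ| ^ (1/2 + 6 * ε) /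
          (jap (τ₁ + ξ₁ ^ 2) ^ (1/2 + ε) * jap (τ - τ₁ - (ξ - ξ₁) ^ 3) ^ (1/2 + ε))
      else 0) ^ 2) ≤ ∫ ξ₁ : ℝ, K ξ₁ :=
    integral_mono_of_nonneg
      (ae_of_all _ fun ξ₁ => integral_nonneg fun τ₁ => sq_nonneg _)
      hKint (ae_of_all _ claim1)
  have claim3 : (∫ ξ₁ : ℝ, K ξ₁) ≤ 8 * I * I := by
    by_cases hξ4 : 4 ≤ |ξ|
    · rw [hKeq, integral_indicator hS]
      have hmono : (∫ x in {x : ℝ | 4 * jap x ≤ |ξ|}, h x) ≤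
          ∫ x in Icc (-(|ξ|/4)) (|ξ|/4), h x :=
        setIntegral_mono_set (hh_cont.integrableOn_Icc)
          (ae_of_all _ hh_nonneg) (HasSubset.Subset.eventuallyLE hsub)
      refine hmono.trans ?_
      have e : (∫ x in Icc (-(|ξ|/4)) (|ξ|/4), h x) = 8 * I * |ξ| ^ p2 *
          ∫ x in Icc (-(|ξ|/4)) (|ξ|/4), (jap (τ + x ^ 2 - (ξ - x) ^ 3) ^ q)⁻¹ := by
        rw [hhdef]; exact integral_const_mul _ _
      rw [e]
      have hsb := subst_bound hq1 τ ξ hξ4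
      have h6 : |ξ| ^ p2 ≤ ξ ^ 2 := by
        have h7 : |ξ| ^ p2 ≤ |ξ| ^ (2:ℝ) :=
          Real.rpow_le_rpow_of_exponent_le (by linarith) (by rw [hp2]; linarith)
        rwa [show (2:ℝ) = ((2:ℕ):ℝ) by norm_num, Real.rpow_natCast, sq_abs] at h7
      have hx2 : (0:ℝ) < ξ ^ 2 := by nlinarith [sq_abs ξ]
      calc 8 * I * |ξ| ^ p2 *
            ∫ x in Icc (-(|ξ|/4)) (|ξ|/4), (jap (τ + x ^ 2 - (ξ - x) ^ 3) ^ q)⁻¹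
          ≤ 8 * I * |ξ| ^ p2 * ((ξ ^ 2)⁻¹ * I) :=
            mul_le_mul_of_nonneg_left hsb (by positivity)
        _ = 8 * I * I * (|ξ| ^ p2 * (ξ ^ 2)⁻¹) := by ring
        _ ≤ 8 * I * I * 1 := by
            refine mul_le_mul_of_nonneg_left ?_ (by positivity)
            rw [← mul_inv_cancel₀ hx2.ne']
            exact mul_le_mul_of_nonneg_right h6 (inv_nonneg.mpr hx2.le)
        _ = 8 * I * I := by ring
    · have hz : ∀ x : ℝ, K x = 0 := by
        intro x
        have hn : ¬ (4 * jap x ≤ |ξ|) := by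
          push_neg at hξ4 ⊢
          have := one_le_jap x
          linarith
        simp only [hK, if_neg hn]
      rw [show (fun ξ₁ : ℝ => K ξ₁) = fun _ => (0:ℝ) from funext hz]
      simp
      positivity
  linarith
end
end

section
/- For each fixed ξ₁ with |ξ₁| ≫ 1 and each t > 0, ‖χ_{1 ≪ |ξ|² ∼ |ξ₁|} · min{1, t|ξ₁|^{1/2}|ξ-2ξ₁-ξ²|} / |ξ-2ξ₁-ξ²|‖_{L²_ξ} ≲ t^{1/2}, with implied constant independent of ξ₁ and t. -/
open MeasureTheory Set

noncomputable section

/-- integral of the scaled Cauchy kernel -/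
lemma phi_integral (a : ℝ) (ha : 0 < a) :
    ∫ y : ℝ, a ^ 2 * (1 + (a * y) ^ 2) ⁻¹ = a * Real.pi := by
  rw [MeasureTheory.integral_const_mul]
  have : (∫ y : ℝ, (1 + (a * y) ^ 2)⁻¹) = |a⁻¹| • ∫ y : ℝ, (1 + y ^ 2)⁻¹ :=
    Measure.integral_comp_mul_left (fun y => (1 + y ^ 2)⁻¹) a
  rw [this, integral_univ_inv_one_add_sq, abs_of_pos (inv_pos.mpr ha), smul_eq_mul]
  field_simp

lemma phi_integrable (a : ℝ) (ha : 0 < a) :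
    Integrable (fun y : ℝ => a ^ 2 * (1 + (a * y) ^ 2)⁻¹) :=
  (integrable_inv_one_add_sq.comp_mul_left' ha.ne').const_mul _

lemma phi_continuous (a : ℝ) : Continuous (fun y : ℝ => a ^ 2 * (1 + (a * y) ^ 2)⁻¹) :=
  continuous_const.mul ((continuous_const.add
    (((continuous_const.mul continuous_id).pow 2))).inv₀ (fun y => by change 1 + (a * y) ^ 2 ≠ 0; positivity))

/-- pointwise bound by scaled Cauchy kernel -/
lemma ptwise_bound (a y : ℝ) (ha : 0 < a) :
    (min 1 (a * |y|) / |y|) ^ 2 ≤ 2 * (a ^ 2 * (1 + (a * y) ^ 2)⁻¹) := by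
  by_cases hy : y = 0
  · simp [hy]
    positivity
  have hy2 : (0:ℝ) < y ^ 2 := by positivity
  have h1 : (0:ℝ) < 1 + (a * y) ^ 2 := by positivity
  have habs : (0:ℝ) < |y| := abs_pos.mpr hy
  have hrw : 2 * (a ^ 2 * (1 + (a * y) ^ 2)⁻¹) = 2 * a ^ 2 / (1 + (a * y) ^ 2) := by
    ring
  rw [hrw, div_pow, sq_abs]
  rcases le_total (a * |y|) 1 with h | h
  · rw [min_eq_right h, div_le_div_iff₀ hy2 h1, mul_pow, sq_abs]
    have h2 : a ^ 2 * y ^ 2 ≤ 1 := by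
      nlinarith [mul_nonneg ha.le (abs_nonneg y), sq_abs y]
    nlinarith [h2, sq_nonneg (a*y), mul_pow a y 2, sq_nonneg a, sq_nonneg y]
  · rw [min_eq_left h, div_le_div_iff₀ hy2 h1]
    have h2 : 1 ≤ a ^ 2 * y ^ 2 := by
      nlinarith [mul_nonneg ha.le (abs_nonneg y), sq_abs y]
    nlinarith [h2, mul_pow a y 2]

/-- substitution bound on an interval where the phase derivative is large -/
lemma key_interval (a lo hi m s : ℝ) (ha : 0 < a) (hm : 0 < m) (hlh : lo ≤ hi)
    (hs : |s| ≤ 1)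
    (q q' : ℝ → ℝ) (hq : ∀ x, HasDerivAt q (q' x) x) (hq' : Continuous q')
    (hlow : ∀ x ∈ Icc lo hi, m ≤ s * q' x) :
    ∫ x in lo..hi, 2 * (a ^ 2 * (1 + (a * q x) ^ 2)⁻¹) ≤ (2 / m) * (a * Real.pi) := by
  set φ : ℝ → ℝ := fun y => a ^ 2 * (1 + (a * y) ^ 2)⁻¹ with hφ
  have hφc : Continuous φ := phi_continuous a
  have hφ0 : ∀ y, 0 ≤ φ y := fun y => by positivity
  have hqc : Continuous q := by
    rw [continuous_iff_continuousAt]; exact fun x => (hq x).continuousAt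
  have int1 : IntervalIntegrable (fun x => 2 * φ (q x)) volume lo hi :=
    (continuous_const.mul (hφc.comp hqc)).intervalIntegrable _ _
  have int2 : IntervalIntegrable (fun x => (2 / m) * (s * q' x * φ (q x))) volume lo hi :=
    (continuous_const.mul ((continuous_const.mul hq').mul
      (hφc.comp hqc))).intervalIntegrable _ _
  have step1 : ∫ x in lo..hi, 2 * φ (q x) ≤
      ∫ x in lo..hi, (2 / m) * (s * q' x * φ (q x)) := by
    refine intervalIntegral.integral_mono_on hlh int1 int2 (fun x hx => ?_)
    have h1 : m * φ (q x) ≤ s * q' x * φ (q x) :=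
      mul_le_mul_of_nonneg_right (hlow x hx) (hφ0 (q x))
    calc 2 * φ (q x) = (2 / m) * (m * φ (q x)) := by field_simp
      _ ≤ (2 / m) * (s * q' x * φ (q x)) :=
        mul_le_mul_of_nonneg_left h1 (by positivity)
  have step2 : ∫ x in lo..hi, (2 / m) * (s * q' x * φ (q x)) =
      (2 / m) * (s * ∫ x in lo..hi, q' x * φ (q x)) := by
    rw [← intervalIntegral.integral_const_mul]
    rw [← intervalIntegral.integral_const_mul]
    congr 1; ext x; ring
  have step3 : ∫ x in lo..hi, q' x * φ (q x) = ∫ y in q lo..q hi, φ y := by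
    have := intervalIntegral.integral_comp_smul_deriv
      (fun x _ => hq x) hq'.continuousOn hφc (a := lo) (b := hi)
    simpa [smul_eq_mul] using this
  have hIoc : ∀ e₁ e₂ : ℝ, (0 ≤ ∫ y in Ioc e₁ e₂, φ y) ∧ (∫ y in Ioc e₁ e₂, φ y) ≤ a * Real.pi := by
    intro e₁ e₂
    constructor
    · exact setIntegral_nonneg measurableSet_Ioc (fun y _ => hφ0 y)
    · calc (∫ y in Ioc e₁ e₂, φ y) ≤ ∫ y, φ y :=
          setIntegral_le_integral (phi_integrable a ha) (ae_of_all _ hφ0)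
        _ = a * Real.pi := phi_integral a ha
  have step4 : |∫ y in q lo..q hi, φ y| ≤ a * Real.pi := by
    rcases le_total (q lo) (q hi) with h | h
    · rw [intervalIntegral.integral_of_le h, abs_of_nonneg (hIoc _ _).1]
      exact (hIoc _ _).2
    · rw [intervalIntegral.integral_of_ge h, abs_neg, abs_of_nonneg (hIoc _ _).1]
      exact (hIoc _ _).2
  calc ∫ x in lo..hi, 2 * φ (q x) ≤ (2 / m) * (s * ∫ y in q lo..q hi, φ y) := by
        rw [← step3, ← step2]; exact step1
    _ ≤ (2 / m) * |s * ∫ y in q lo..q hi, φ y| :=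
        mul_le_mul_of_nonneg_left (le_abs_self _) (by positivity)
    _ = (2 / m) * (|s| * |∫ y in q lo..q hi, φ y|) := by rw [abs_mul]
    _ ≤ (2 / m) * (1 * (a * Real.pi)) := by
        apply mul_le_mul_of_nonneg_left _ (by positivity)
        exact mul_le_mul hs step4 (abs_nonneg _) one_pos.le
    _ = (2 / m) * (a * Real.pi) := by ring

/-- Time-dependent resonant kernel bound: for comparability constant `K ≥ 1` there are
`C, M > 0` such that for every `t > 0` and every fixed `ξ₁` with `|ξ₁| ≥ M`,
`∫_{M ≤ ξ², ξ² ∼_K |ξ₁|} (min{1, t|ξ₁|^{1/2}|ξ-2ξ₁-ξ²|}/|ξ-2ξ₁-ξ²|)² dξ ≤ C t`,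
with constant independent of `ξ₁` and `t`. -/
theorem resonant_kernel_bound_time (K : ℝ) (hK : 1 ≤ K) :
    ∃ C M : ℝ, 0 < C ∧ 0 < M ∧ ∀ t : ℝ, 0 < t → ∀ ξ₁ : ℝ, M ≤ |ξ₁| →
      (∫ ξ : ℝ,
        (if M ≤ ξ ^ 2 ∧ |ξ₁| ≤ K * ξ ^ 2 ∧ ξ ^ 2 ≤ K * |ξ₁| then
          (min 1 (t * |ξ₁| ^ ((1:ℝ)/2) * |ξ - 2 * ξ₁ - ξ ^ 2|) / |ξ - 2 * ξ₁ - ξ ^ 2|) ^ 2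
        else 0)) ≤ C * t := by
  have hK0 : (0:ℝ) < K := lt_of_lt_of_le one_pos hK
  refine ⟨4 * Real.pi * Real.sqrt K + 1, 4 * K, by positivity, by linarith, ?_⟩
  intro t ht ξ₁ hM
  have habs : (0:ℝ) < |ξ₁| := by linarith
  set a : ℝ := t * |ξ₁| ^ ((1:ℝ)/2) with haDef
  have ha : 0 < a := mul_pos ht (Real.rpow_pos_of_pos habs _)
  set c : ℝ := Real.sqrt (|ξ₁| / K) with hcDef
  set d : ℝ := Real.sqrt (K * |ξ₁|) with hdDef
  have hc0 : 0 < c := Real.sqrt_pos.mpr (by positivity)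
  have hc2 : 2 ≤ c := by
    rw [hcDef, show (2:ℝ) = Real.sqrt 4 by
      rw [show (4:ℝ) = 2^2 by norm_num, Real.sqrt_sq (by norm_num)]]
    apply Real.sqrt_le_sqrt
    rw [le_div_iff₀ hK0]; linarith
  have hcd : c ≤ d := by
    apply Real.sqrt_le_sqrt
    rw [div_le_iff₀ hK0]
    have hKK : 1 ≤ K * K := by nlinarith
    nlinarith [mul_le_mul_of_nonneg_right hKK habs.le]
  have hd0 : 0 < d := lt_of_lt_of_le hc0 hcd
  set φ : ℝ → ℝ := fun y => a ^ 2 * (1 + (a * y) ^ 2)⁻¹ with hφDef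
  set F : ℝ → ℝ := fun ξ => 2 * φ (ξ - 2 * ξ₁ - ξ ^ 2) with hFDef
  have hF0 : ∀ ξ, 0 ≤ F ξ := fun ξ => by positivity
  have hFc : Continuous F := by
    apply continuous_const.mul
    exact (phi_continuous a).comp (by continuity)
  have int1 : Integrable ((Icc c d).indicator F) :=
    (hFc.integrableOn_Icc).integrable_indicator measurableSet_Icc
  have int2 : Integrable ((Icc (-d) (-c)).indicator F) :=
    (hFc.integrableOn_Icc).integrable_indicator measurableSet_Icc
  set G : ℝ → ℝ := fun ξ => (Icc c d).indicator F ξ + (Icc (-d) (-c)).indicator F ξ with hGDef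
  have hGint : Integrable G := int1.add int2
  -- pointwise domination
  have hmono : ∀ ξ : ℝ,
      (if 4 * K ≤ ξ ^ 2 ∧ |ξ₁| ≤ K * ξ ^ 2 ∧ ξ ^ 2 ≤ K * |ξ₁| then
          (min 1 (t * |ξ₁| ^ ((1:ℝ)/2) * |ξ - 2 * ξ₁ - ξ ^ 2|) / |ξ - 2 * ξ₁ - ξ ^ 2|) ^ 2
        else 0) ≤ G ξ := by
    intro ξ
    by_cases hreg : 4 * K ≤ ξ ^ 2 ∧ |ξ₁| ≤ K * ξ ^ 2 ∧ ξ ^ 2 ≤ K * |ξ₁|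
    · rw [if_pos hreg]
      obtain ⟨h1, h2, h3⟩ := hreg
      have hFb : (min 1 (t * |ξ₁| ^ ((1:ℝ)/2) * |ξ - 2 * ξ₁ - ξ ^ 2|) /
          |ξ - 2 * ξ₁ - ξ ^ 2|) ^ 2 ≤ F ξ := by
        have := ptwise_bound a (ξ - 2 * ξ₁ - ξ ^ 2) ha
        simpa [hFDef, hφDef, haDef, mul_assoc] using this
      have hlow : c ≤ |ξ| := by
        have hdd : |ξ₁| / K ≤ ξ ^ 2 := by rw [div_le_iff₀ hK0]; linarith
        calc c ≤ Real.sqrt (ξ ^ 2) := Real.sqrt_le_sqrt hdd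
          _ = |ξ| := Real.sqrt_sq_eq_abs ξ
      have hhigh : |ξ| ≤ d := by
        calc |ξ| = Real.sqrt (ξ ^ 2) := (Real.sqrt_sq_eq_abs ξ).symm
          _ ≤ d := Real.sqrt_le_sqrt h3
      rcases le_or_gt 0 ξ with hξ | hξ
      · have hmem : ξ ∈ Icc c d := by
          rw [abs_of_nonneg hξ] at hlow hhigh; exact ⟨hlow, hhigh⟩
        calc (min 1 (t * |ξ₁| ^ ((1:ℝ)/2) * |ξ - 2 * ξ₁ - ξ ^ 2|) /
              |ξ - 2 * ξ₁ - ξ ^ 2|) ^ 2 ≤ F ξ := hFb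
          _ = (Icc c d).indicator F ξ := (indicator_of_mem hmem F).symm
          _ ≤ G ξ := le_add_of_nonneg_right (indicator_nonneg (fun y _ => hF0 y) ξ)
      · have hmem : ξ ∈ Icc (-d) (-c) := by
          rw [abs_of_neg hξ] at hlow hhigh
          constructor <;> linarith
        calc (min 1 (t * |ξ₁| ^ ((1:ℝ)/2) * |ξ - 2 * ξ₁ - ξ ^ 2|) /
              |ξ - 2 * ξ₁ - ξ ^ 2|) ^ 2 ≤ F ξ := hFb
          _ = (Icc (-d) (-c)).indicator F ξ := (indicator_of_mem hmem F).symm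
          _ ≤ G ξ := le_add_of_nonneg_left (indicator_nonneg (fun y _ => hF0 y) ξ)
    · rw [if_neg hreg]
      exact add_nonneg (indicator_nonneg (fun y _ => hF0 y) ξ)
        (indicator_nonneg (fun y _ => hF0 y) ξ)
  have hIle : (∫ ξ : ℝ,
      (if 4 * K ≤ ξ ^ 2 ∧ |ξ₁| ≤ K * ξ ^ 2 ∧ ξ ^ 2 ≤ K * |ξ₁| then
          (min 1 (t * |ξ₁| ^ ((1:ℝ)/2) * |ξ - 2 * ξ₁ - ξ ^ 2|) / |ξ - 2 * ξ₁ - ξ ^ 2|) ^ 2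
        else 0)) ≤ ∫ ξ : ℝ, G ξ := by
    refine integral_mono_of_nonneg (ae_of_all _ fun ξ => ?_) hGint (ae_of_all _ hmono)
    dsimp only
    split <;> positivity
  -- evaluate/estimate ∫ G
  have hq1 : ∀ x : ℝ, HasDerivAt (fun y : ℝ => y - 2 * ξ₁ - y ^ 2) (1 - 2 * x) x := by
    intro x
    have h := ((hasDerivAt_id x).sub_const (2 * ξ₁)).sub (hasDerivAt_pow 2 x)
    exact h.congr_deriv (by norm_num)
  have hq' : Continuous (fun x : ℝ => 1 - 2 * x) :=
    continuous_const.sub (continuous_const.mul continuous_id)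
  have bound1 : ∫ ξ in Icc c d, F ξ ≤ (2 / c) * (a * Real.pi) := by
    rw [MeasureTheory.integral_Icc_eq_integral_Ioc,
      ← intervalIntegral.integral_of_le hcd]
    exact key_interval a c d c (-1) ha hc0 hcd (by norm_num) _ _ hq1 hq'
      (fun x hx => by nlinarith [hx.1])
  have bound2 : ∫ ξ in Icc (-d) (-c), F ξ ≤ (2 / c) * (a * Real.pi) := by
    rw [MeasureTheory.integral_Icc_eq_integral_Ioc,
      ← intervalIntegral.integral_of_le (by linarith : -d ≤ -c)]
    exact key_interval a (-d) (-c) c 1 ha hc0 (by linarith) (by norm_num) _ _ hq1 hq'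
      (fun x hx => by nlinarith [hx.2])
  have hGval : (∫ ξ : ℝ, G ξ) ≤ (2 / c) * (a * Real.pi) + (2 / c) * (a * Real.pi) := by
    rw [hGDef]
    rw [integral_add int1 int2, integral_indicator measurableSet_Icc,
      integral_indicator measurableSet_Icc]
    exact add_le_add bound1 bound2
  -- final arithmetic
  have hsqK : 0 < Real.sqrt K := Real.sqrt_pos.mpr hK0
  have hsqA : 0 < Real.sqrt |ξ₁| := Real.sqrt_pos.mpr habs
  have hcc : c = Real.sqrt |ξ₁| / Real.sqrt K := Real.sqrt_div (abs_nonneg ξ₁) K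
  have haa : a = t * Real.sqrt |ξ₁| := by rw [haDef, Real.sqrt_eq_rpow]
  have hfinal : (2 / c) * (a * Real.pi) + (2 / c) * (a * Real.pi) ≤
      (4 * Real.pi * Real.sqrt K + 1) * t := by
    have key : (2 / c) * (a * Real.pi) = 2 * Real.pi * Real.sqrt K * t := by
      rw [hcc, haa]; field_simp
    rw [key]
    nlinarith [ht.le]
  calc _ ≤ ∫ ξ : ℝ, G ξ := hIle
    _ ≤ (2 / c) * (a * Real.pi) + (2 / c) * (a * Real.pi) := hGval
    _ ≤ (4 * Real.pi * Real.sqrt K + 1) * t := hfinal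
end
end

section
/- Suppose Φ: ℝ² → ℂ satisfies: (i) |Φ(x,y)| ≤ h₁(x)h₂(y) with h₁, h₂ ∈ L¹(ℝ). Then the bilinear operator B(u)(t,x) = ∫∫ u(t,y) conj(u)(t,z) Φ(z-y, x-z) dy dz satisfies ‖B(u)‖_{L²_x L^∞_t} ≲ ‖h₁‖_{L¹}‖h₂‖_{L¹} ‖u‖²_{L⁴_x L^∞_t}. -/
open MeasureTheory Complex Set
open scoped ENNReal NNReal

noncomputable section

namespace BoundaryBilinearAux

open Function

def phi (t : ℝ≥0∞) : ℝ≥0∞ := (1 + t⁻¹)⁻¹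

lemma phi_le_phi_iff {a b : ℝ≥0∞} : phi a ≤ phi b ↔ a ≤ b := by
  unfold phi
  rw [ENNReal.inv_le_inv, ENNReal.add_le_add_iff_left (by simp : (1:ℝ≥0∞) ≠ ∞),
    ENNReal.inv_le_inv]

lemma phi_le_one (t : ℝ≥0∞) : phi t ≤ 1 := by
  unfold phi
  have : (1:ℝ≥0∞) = (1:ℝ≥0∞)⁻¹ := by simp
  rw [this, ENNReal.inv_le_inv, ← this]
  exact le_self_add

lemma measurable_phi_comp {m : ℝ → ℝ≥0∞} (hm : Measurable m) :
    Measurable fun x => phi (m x) := ((hm.inv.const_add 1)).inv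

def rho (x : ℝ) : ℝ≥0∞ := ENNReal.ofReal (Real.exp (-(x^2)))

lemma rho_ne_zero (x : ℝ) : rho x ≠ 0 := by
  simp [rho, ENNReal.ofReal_eq_zero, not_le, Real.exp_pos]

lemma rho_ne_top (x : ℝ) : rho x ≠ ∞ := ENNReal.ofReal_ne_top

lemma measurable_rho : Measurable rho := by
  apply ENNReal.measurable_ofReal.comp
  exact (Real.continuous_exp.comp (continuous_pow 2).neg).measurable

lemma rho_lintegral_ne_top : ∫⁻ x, rho x ≠ ∞ := by
  have hi : Integrable (fun x : ℝ => Real.exp (-(x^2))) := by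
    simpa [neg_mul, one_mul] using integrable_exp_neg_mul_sq (one_pos)
  unfold rho
  rw [← ofReal_integral_eq_lintegral_ofReal hi (ae_of_all _ fun x => (Real.exp_pos _).le)]
  exact ENNReal.ofReal_ne_top


/-- every function has a maximal measurable minorant. -/
lemma exists_max_minorant (V : ℝ → ℝ≥0∞) :
    ∃ g : ℝ → ℝ≥0∞, Measurable g ∧ g ≤ V ∧
      ∀ m : ℝ → ℝ≥0∞, Measurable m → m ≤ V → ∀ᵐ x : ℝ, m x ≤ g x := by
  set G := {m : ℝ → ℝ≥0∞ // Measurable m ∧ m ≤ V} with hG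
  haveI : Nonempty G := ⟨⟨0, measurable_const, fun x => zero_le⟩⟩
  set D : (ℝ → ℝ≥0∞) → ℝ≥0∞ := fun m => ∫⁻ x, phi (m x) * rho x with hD
  have hDmono : ∀ m m' : ℝ → ℝ≥0∞, m ≤ m' → D m ≤ D m' := fun m m' h =>
    lintegral_mono fun x => mul_le_mul_left (phi_le_phi_iff.2 (h x)) _
  have hDle : ∀ m, D m ≤ ∫⁻ x, rho x := fun m => lintegral_mono fun x => by
    calc phi (m x) * rho x ≤ 1 * rho x := mul_le_mul_left (phi_le_one _) _
    _ = rho x := one_mul _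
  have hDtop : ∀ m, D m ≠ ∞ := fun m => ((hDle m).trans_lt rho_lintegral_ne_top.lt_top).ne
  set c : ℝ≥0∞ := ⨆ m : G, D m.1 with hc
  have key : ∃ g : ℝ → ℝ≥0∞, Measurable g ∧ g ≤ V ∧ c ≤ D g := by
    rcases eq_or_ne c 0 with h0 | h0
    · exact ⟨0, measurable_const, fun x => zero_le, h0 ▸ zero_le⟩
    rcases exists_seq_strictMono_tendsto' h0.bot_lt with ⟨L, _, hLc, hL_tendsto⟩
    have : ∀ n : ℕ, ∃ m : G, L n < D m.1 := by
      intro n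
      have := (hLc n).2
      rw [hc, lt_iSup_iff] at this
      exact this
    choose mn hmn using this
    refine ⟨fun x => ⨆ n, (mn n).1 x, Measurable.iSup (fun n => (mn n).2.1),
      fun x => iSup_le fun n => (mn n).2.2 x, ?_⟩
    refine le_of_tendsto' hL_tendsto fun n => (hmn n).le.trans ?_
    exact hDmono _ _ fun x => le_iSup (fun k => (mn k).1 x) n
  obtain ⟨g, hgm, hgV, hgc⟩ := key
  have hDgc : D g = c := le_antisymm (le_iSup (fun m : G => D m.1) ⟨g, hgm, hgV⟩) hgc
  refine ⟨g, hgm, hgV, fun m hm hmV => ?_⟩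
  set m' : ℝ → ℝ≥0∞ := fun x => max (m x) (g x) with hm'def
  have hm'm : Measurable m' := hm.max hgm
  have hm'V : m' ≤ V := fun x => max_le (hmV x) (hgV x)
  have h1 : D m' ≤ D g := hDgc ▸ le_iSup (fun m : G => D m.1) ⟨m', hm'm, hm'V⟩
  set F : ℝ → ℝ≥0∞ := fun x => phi (m' x) * rho x with hF
  set Gf : ℝ → ℝ≥0∞ := fun x => phi (g x) * rho x with hGf
  have hGF : ∀ x, Gf x ≤ F x := fun x =>
    mul_le_mul_left (phi_le_phi_iff.2 (le_max_right _ _)) _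
  have hFm : Measurable F := (measurable_phi_comp hm'm).mul measurable_rho
  have hGm : Measurable Gf := (measurable_phi_comp hgm).mul measurable_rho
  have hGfin : ∫⁻ x, Gf x ≠ ∞ := hDtop g
  have hsub : ∫⁻ x, (F x - Gf x) = (∫⁻ x, F x) - ∫⁻ x, Gf x :=
    lintegral_sub hGm hGfin (ae_of_all _ hGF)
  have hzero : ∫⁻ x, (F x - Gf x) = 0 := by
    rw [hsub]
    exact tsub_eq_zero_of_le h1
  have hae := (lintegral_eq_zero_iff (hFm.sub hGm)).1 hzero
  filter_upwards [hae] with x hx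
  have hFG : F x ≤ Gf x := tsub_eq_zero_iff_le.1 hx
  have : phi (m' x) ≤ phi (g x) :=
    (ENNReal.mul_le_mul_iff_left (rho_ne_zero x) (rho_ne_top x)).1 hFG
  have := phi_le_phi_iff.1 this
  exact (max_le_iff.1 this).1


lemma sq_half (a : ℝ≥0∞) : (a ^ ((1:ℝ)/2)) ^ 2 = a := by
  rw [← ENNReal.rpow_natCast (a ^ ((1:ℝ)/2)) 2, ← ENNReal.rpow_mul]
  norm_num

lemma half_sq (a : ℝ≥0∞) : (a ^ 2) ^ ((1:ℝ)/2) = a := by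
  rw [← ENNReal.rpow_natCast a 2, ← ENNReal.rpow_mul]
  norm_num

lemma lintegral_mul_le_minorant {V g : ℝ → ℝ≥0∞}
    (hmax : ∀ m : ℝ → ℝ≥0∞, Measurable m → m ≤ V → ∀ᵐ x : ℝ, m x ≤ g x)
    {ψ : ℝ → ℝ≥0∞} (hψ : Measurable ψ) (hψtop : ∀ x, ψ x ≠ ∞) :
    ∫⁻ x, V x * ψ x ≤ ∫⁻ x, g x * ψ x := by
  obtain ⟨m, hm, hmle, hint⟩ := exists_measurable_le_lintegral_eq volume (fun x => V x * ψ x)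
  rw [hint]
  have hm0 : ∀ x, ψ x = 0 → m x = 0 := fun x h =>
    le_antisymm (by simpa [h] using hmle x) zero_le
  set m₀ : ℝ → ℝ≥0∞ := fun x => m x * (ψ x)⁻¹ with hm₀def
  have hm₀ : Measurable m₀ := hm.mul hψ.inv
  have hm₀le : m₀ ≤ V := by
    intro x
    rcases eq_or_ne (ψ x) 0 with h | h
    · simp [hm₀def, hm0 x h]
    · calc m x * (ψ x)⁻¹ ≤ V x * ψ x * (ψ x)⁻¹ := mul_le_mul_left (hmle x) _
      _ = V x * (ψ x * (ψ x)⁻¹) := mul_assoc _ _ _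
      _ = V x := by rw [ENNReal.mul_inv_cancel h (hψtop x), mul_one]
  have hae := hmax m₀ hm₀ hm₀le
  refine lintegral_mono_ae ?_
  filter_upwards [hae] with x hx
  calc m x ≤ m₀ x * ψ x := by
        rcases eq_or_ne (ψ x) 0 with h | h
        · simp [hm0 x h]
        · have : m₀ x * ψ x = m x * ((ψ x)⁻¹ * ψ x) := mul_assoc _ _ _
          rw [this, ENNReal.inv_mul_cancel h (hψtop x), mul_one]
    _ ≤ g x * ψ x := mul_le_mul_left hx _

lemma young {f k : ℝ → ℝ≥0∞} (hf : Measurable f) (hk : Measurable k) :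
    (∫⁻ x : ℝ, (∫⁻ z : ℝ, f z * k (x - z)) ^ 2) ^ ((1:ℝ)/2) ≤
      (∫⁻ z : ℝ, k z) * (∫⁻ z : ℝ, f z ^ 2) ^ ((1:ℝ)/2) := by
  set B := ∫⁻ z : ℝ, k z with hB
  have conj : Real.HolderConjugate 2 2 := ⟨by norm_num, by norm_num, by norm_num⟩
  have hBx : ∀ x : ℝ, ∫⁻ z, k (x - z) = B :=
    fun x => (Measure.measurePreserving_sub_left volume x).lintegral_comp hk
  have hBx' : ∀ z : ℝ, ∫⁻ x, k (x - z) = B :=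
    fun z => (measurePreserving_sub_right volume z).lintegral_comp hk
  have hkc : ∀ x : ℝ, Measurable fun z : ℝ => k (x - z) :=
    fun x => hk.comp (measurable_const.sub measurable_id)
  have hkc' : ∀ z : ℝ, Measurable fun x : ℝ => k (x - z) :=
    fun z => hk.comp (measurable_id.sub measurable_const)
  set A : ℝ → ℝ≥0∞ := fun x => ∫⁻ z, f z ^ 2 * k (x - z) with hA
  have hstep : ∀ x : ℝ, (∫⁻ z, f z * k (x - z)) ^ 2 ≤ A x * B := by
    intro x
    have H := ENNReal.lintegral_mul_le_Lp_mul_Lq volume conj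
      (f := fun z => f z * k (x - z) ^ ((1:ℝ)/2))
      (g := fun z => k (x - z) ^ ((1:ℝ)/2))
      ((hf.mul ((hkc x).pow_const _)).aemeasurable)
      (((hkc x).pow_const _).aemeasurable)
    simp only [Pi.mul_apply] at H
    have e1 : ∀ z : ℝ, f z * k (x - z) ^ ((1:ℝ)/2) * (k (x - z) ^ ((1:ℝ)/2)) =
        f z * k (x - z) := by
      intro z
      rw [mul_assoc, ← ENNReal.rpow_add_of_nonneg _ _ (by norm_num) (by norm_num)]
      norm_num
    have e2 : ∀ z : ℝ, (f z * k (x - z) ^ ((1:ℝ)/2)) ^ (2:ℝ) = f z ^ 2 * k (x - z) := by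
      intro z
      rw [ENNReal.mul_rpow_of_nonneg _ _ (by norm_num), ← ENNReal.rpow_mul,
        ← ENNReal.rpow_natCast (f z) 2]
      norm_num
    have e3 : ∀ z : ℝ, (k (x - z) ^ ((1:ℝ)/2)) ^ (2:ℝ) = k (x - z) := by
      intro z
      rw [← ENNReal.rpow_mul]
      norm_num
    simp only [e1, e2, e3] at H
    rw [hBx x] at H
    calc (∫⁻ z, f z * k (x - z)) ^ 2 ≤ (A x ^ ((1:ℝ)/2) * B ^ ((1:ℝ)/2)) ^ 2 :=
          pow_le_pow_left' H 2
      _ = A x * B := by rw [mul_pow, sq_half, sq_half]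
  have hunc : Measurable (uncurry fun x z : ℝ => f z ^ 2 * k (x - z)) :=
    ((hf.comp measurable_snd).pow_const 2).mul (hk.comp (measurable_fst.sub measurable_snd))
  have hAm : Measurable A := hunc.lintegral_prod_right'
  have hint : ∫⁻ x, A x = (∫⁻ z, f z ^ 2) * B := by
    rw [hA]
    rw [lintegral_lintegral_swap hunc.aemeasurable]
    calc ∫⁻ z, ∫⁻ x, f z ^ 2 * k (x - z) = ∫⁻ z, f z ^ 2 * B := by
          refine lintegral_congr fun z => ?_
          rw [lintegral_const_mul _ (hkc' z), hBx' z]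
      _ = (∫⁻ z, f z ^ 2) * B := lintegral_mul_const B (hf.pow_const 2)
  have hmain : (∫⁻ x : ℝ, (∫⁻ z : ℝ, f z * k (x - z)) ^ 2) ≤ (∫⁻ z, f z ^ 2) * B * B := by
    calc (∫⁻ x : ℝ, (∫⁻ z : ℝ, f z * k (x - z)) ^ 2) ≤ ∫⁻ x, A x * B :=
          lintegral_mono hstep
      _ = (∫⁻ x, A x) * B := lintegral_mul_const B hAm
      _ = (∫⁻ z, f z ^ 2) * B * B := by rw [hint]
  calc (∫⁻ x : ℝ, (∫⁻ z : ℝ, f z * k (x - z)) ^ 2) ^ ((1:ℝ)/2) ≤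
        ((∫⁻ z, f z ^ 2) * B * B) ^ ((1:ℝ)/2) := ENNReal.rpow_le_rpow hmain (by norm_num)
    _ = B * (∫⁻ z, f z ^ 2) ^ ((1:ℝ)/2) := by
        rw [mul_assoc, mul_comm]
        rw [ENNReal.mul_rpow_of_nonneg _ _ (by norm_num)]
        rw [show B * B = B ^ 2 from (sq B).symm, half_sq]


lemma mul_le_sq_add_sq (a b : ℝ≥0∞) : a * b ≤ a ^ 2 + b ^ 2 := by
  rcases le_total a b with h | h
  · calc a * b ≤ b * b := mul_le_mul_left h b
    _ = b ^ 2 := (sq b).symm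
    _ ≤ a ^ 2 + b ^ 2 := le_add_self
  · calc a * b ≤ a * a := mul_le_mul_right h a
    _ = a ^ 2 := (sq a).symm
    _ ≤ a ^ 2 + b ^ 2 := le_self_add

lemma ae_comp_mp {T : ℝ → ℝ} (hT : MeasurePreserving T volume volume)
    {g g' : ℝ → ℝ≥0∞} (h : g =ᵐ[volume] g') :
    (fun y => g (T y)) =ᵐ[volume] fun y => g' (T y) :=
  ae_eq_comp' (ν := volume) hT.measurable.aemeasurable h
    (Measure.absolutelyContinuous_of_eq hT.map_eq)

/-- Minkowski in the squared form we use. -/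
lemma Lp2_add {f g : ℝ → ℝ≥0∞} (hf : Measurable f) (hg : Measurable g) :
    (∫⁻ x, (f x + g x) ^ 2) ^ ((1:ℝ)/2) ≤
      (∫⁻ x, f x ^ 2) ^ ((1:ℝ)/2) + (∫⁻ x, g x ^ 2) ^ ((1:ℝ)/2) := by
  have h2 : ∀ a : ℝ≥0∞, a ^ (2:ℝ) = a ^ 2 := fun a => by
    rw [← ENNReal.rpow_natCast a 2]; norm_num
  have := ENNReal.lintegral_Lp_add_le (μ := volume) hf.aemeasurable hg.aemeasurable
    (one_le_two : (1:ℝ) ≤ 2)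
  simp only [Pi.add_apply, h2] at this
  exact this

end BoundaryBilinearAux

open BoundaryBilinearAux Function

/-- Mixed-norm bound for the boundary bilinear operator: if `|Φ(x,y)| ≤ h₁(x)h₂(y)`
with `h₁, h₂ ∈ L¹`, then `B(u)(t,x) = ∫∫ u(t,y) conj(u(t,z)) Φ(z-y, x-z) dy dz` satisfies
`‖B(u)‖_{L²_x L^∞_t} ≲ ‖h₁‖_{L¹}‖h₂‖_{L¹}‖u‖²_{L⁴_x L^∞_t}`. -/
theorem boundary_bilinear_mixed_norm :
    ∃ C : ℝ, 0 < C ∧ ∀ (Φ : ℝ → ℝ → ℂ) (h₁ h₂ : ℝ → ℝ) (u : ℝ → ℝ → ℂ),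
      Integrable h₁ volume → Integrable h₂ volume →
      (∀ x y : ℝ, ‖Φ x y‖ ≤ h₁ x * h₂ y) →
      (∫⁻ x : ℝ, (⨆ t : ℝ,
          (‖∫ y : ℝ, ∫ z : ℝ,
              u t y * (starRingEnd ℂ) (u t z) * Φ (z - y) (x - z)‖₊ : ℝ≥0∞)) ^ 2) ^
          ((1:ℝ)/2) ≤
        ENNReal.ofReal (C * (∫ x : ℝ, |h₁ x|) * (∫ x : ℝ, |h₂ x|)) *
          ((∫⁻ x : ℝ, (⨆ t : ℝ, (‖u t x‖₊ : ℝ≥0∞)) ^ 4) ^ ((1:ℝ)/4)) ^ 2 := by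
  refine ⟨2, two_pos, ?_⟩
  intro Φ h₁ h₂ u hh₁ hh₂ hΦ
  -- measurable representatives of h₁, h₂
  set h₁' : ℝ → ℝ := hh₁.1.aemeasurable.mk _ with hh₁'def
  set h₂' : ℝ → ℝ := hh₂.1.aemeasurable.mk _ with hh₂'def
  have hh₁'m : Measurable h₁' := hh₁.1.aemeasurable.measurable_mk
  have hh₂'m : Measurable h₂' := hh₂.1.aemeasurable.measurable_mk
  have hh₁'ae : h₁ =ᵐ[volume] h₁' := hh₁.1.aemeasurable.ae_eq_mk
  have hh₂'ae : h₂ =ᵐ[volume] h₂' := hh₂.1.aemeasurable.ae_eq_mk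
  set H₁ : ℝ → ℝ≥0∞ := fun a => ENNReal.ofReal |h₁ a| with hH₁def
  set H₂ : ℝ → ℝ≥0∞ := fun a => ENNReal.ofReal |h₂ a| with hH₂def
  set H₁' : ℝ → ℝ≥0∞ := fun a => ENNReal.ofReal |h₁' a| with hH₁'def
  set H₂' : ℝ → ℝ≥0∞ := fun a => ENNReal.ofReal |h₂' a| with hH₂'def
  have hH₁ae : H₁ =ᵐ[volume] H₁' := hh₁'ae.mono fun a ha => by simp [hH₁def, hH₁'def, ha]
  have hH₂ae : H₂ =ᵐ[volume] H₂' := hh₂'ae.mono fun a ha => by simp [hH₂def, hH₂'def, ha]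
  have hH₁'m : Measurable H₁' := ENNReal.measurable_ofReal.comp hh₁'m.abs
  have hH₂'m : Measurable H₂' := ENNReal.measurable_ofReal.comp hh₂'m.abs
  have hH₁'top : ∀ a, H₁' a ≠ ∞ := fun a => ENNReal.ofReal_ne_top
  have hH₂'top : ∀ a, H₂' a ≠ ∞ := fun a => ENNReal.ofReal_ne_top
  set N₁ : ℝ≥0∞ := ∫⁻ a, H₁' a with hN₁def
  set N₂ : ℝ≥0∞ := ∫⁻ a, H₂' a with hN₂def
  have hN₁ : N₁ = ENNReal.ofReal (∫ x, |h₁ x|) := by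
    rw [hN₁def, ← lintegral_congr_ae hH₁ae,
      ofReal_integral_eq_lintegral_ofReal hh₁.abs (ae_of_all _ fun x => abs_nonneg _)]
  have hN₂ : N₂ = ENNReal.ofReal (∫ x, |h₂ x|) := by
    rw [hN₂def, ← lintegral_congr_ae hH₂ae,
      ofReal_integral_eq_lintegral_ofReal hh₂.abs (ae_of_all _ fun x => abs_nonneg _)]
  have hN₁top : N₁ ≠ ∞ := by rw [hN₁]; exact ENNReal.ofReal_ne_top
  have hN₂top : N₂ ≠ ∞ := by rw [hN₂]; exact ENNReal.ofReal_ne_top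
  -- sup in t, and its maximal minorant
  set U : ℝ → ℝ≥0∞ := fun x => ⨆ t : ℝ, (‖u t x‖₊ : ℝ≥0∞) with hUdef
  set V : ℝ → ℝ≥0∞ := fun x => U x ^ 2 with hVdef
  obtain ⟨g, hgm, hgV, hgmax⟩ := exists_max_minorant V
  -- the convolution kernel K = H₁' ⋆ H₂'
  set K : ℝ → ℝ≥0∞ := fun w => ∫⁻ s, H₁' s * H₂' (w - s) with hKdef
  have hKunc : Measurable (uncurry fun w s : ℝ => H₁' s * H₂' (w - s)) :=
    (hH₁'m.comp measurable_snd).mul (hH₂'m.comp (measurable_fst.sub measurable_snd))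
  have hKm : Measurable K := hKunc.lintegral_prod_right'
  have hKint : ∫⁻ w, K w = N₁ * N₂ := by
    rw [hKdef]
    rw [lintegral_lintegral_swap hKunc.aemeasurable]
    calc ∫⁻ s, ∫⁻ w, H₁' s * H₂' (w - s) = ∫⁻ s, H₁' s * N₂ := by
          refine lintegral_congr fun s => ?_
          have e : ∫⁻ w, H₁' s * H₂' (w - s) = ∫⁻ b, H₁' s * H₂' b :=
            (measurePreserving_sub_right volume s).lintegral_comp
              (measurable_const.mul hH₂'m)
          rw [e, lintegral_const_mul _ hH₂'m]
      _ = N₁ * N₂ := lintegral_mul_const _ hH₁'m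
  have hKae : ∀ᵐ w : ℝ, K w < ∞ :=
    ae_lt_top hKm (by rw [hKint]; exact ENNReal.mul_ne_top hN₁top hN₂top)
  set K' : ℝ → ℝ≥0∞ := fun w => if K w = ∞ then 0 else K w with hK'def
  have hK'm : Measurable K' :=
    Measurable.ite (hKm (measurableSet_singleton ∞)) measurable_const hKm
  have hK'top : ∀ w, K' w ≠ ∞ := by
    intro w; rw [hK'def]; dsimp only; split
    · exact ENNReal.zero_ne_top
    · assumption
  have hK'K : K' =ᵐ[volume] K := hKae.mono fun w hw => by
    rw [hK'def]; dsimp only; rw [if_neg hw.ne]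
  have hK'int : ∫⁻ w, K' w = N₁ * N₂ := by rw [lintegral_congr_ae hK'K, hKint]
  -- the two convolution-type majorants
  set T₂' : ℝ → ℝ≥0∞ := fun x => ∫⁻ z, g z * H₂' (x - z) with hT₂'def
  set T₁ : ℝ → ℝ≥0∞ := fun x => ∫⁻ y, g y * K' (x - y) with hT₁def
  have hT₁unc : Measurable (uncurry fun x y : ℝ => g y * K' (x - y)) :=
    (hgm.comp measurable_snd).mul (hK'm.comp (measurable_fst.sub measurable_snd))
  have hT₁m : Measurable T₁ := hT₁unc.lintegral_prod_right'
  have hT₂'unc : Measurable (uncurry fun x z : ℝ => g z * H₂' (x - z)) :=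
    (hgm.comp measurable_snd).mul (hH₂'m.comp (measurable_fst.sub measurable_snd))
  have hT₂'m : Measurable T₂' := hT₂'unc.lintegral_prod_right'
  have hψm : ∀ x y : ℝ, Measurable fun z => H₁' (z - y) * H₂' (x - z) := fun x y =>
    (hH₁'m.comp (measurable_id.sub measurable_const)).mul
      (hH₂'m.comp (measurable_const.sub measurable_id))
  -- the key pointwise bound
  have key : ∀ x : ℝ, (⨆ t : ℝ,
      (‖∫ y, ∫ z, u t y * (starRingEnd ℂ) (u t z) * Φ (z - y) (x - z)‖₊ : ℝ≥0∞)) ≤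
      T₁ x + N₁ * T₂' x := by
    intro x
    refine iSup_le fun t => ?_
    calc (‖∫ y, ∫ z, u t y * (starRingEnd ℂ) (u t z) * Φ (z - y) (x - z)‖₊ : ℝ≥0∞)
        ≤ ∫⁻ y, (‖∫ z, u t y * (starRingEnd ℂ) (u t z) * Φ (z - y) (x - z)‖₊ : ℝ≥0∞) :=
          enorm_integral_le_lintegral_enorm _
      _ ≤ ∫⁻ y, ∫⁻ z, (‖u t y * (starRingEnd ℂ) (u t z) * Φ (z - y) (x - z)‖₊ : ℝ≥0∞) :=
          lintegral_mono fun y => enorm_integral_le_lintegral_enorm _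
      _ ≤ ∫⁻ y, ∫⁻ z, (V y + V z) * (H₁ (z - y) * H₂ (x - z)) := by
          refine lintegral_mono fun y => lintegral_mono fun z => ?_
          have hn : (‖u t y * (starRingEnd ℂ) (u t z) * Φ (z - y) (x - z)‖₊ : ℝ≥0∞) =
              ((‖u t y‖₊ : ℝ≥0∞) * ‖u t z‖₊) * ‖Φ (z - y) (x - z)‖₊ := by
            simp [nnnorm_mul, RCLike.nnnorm_conj]
          rw [hn]
          have hb : (‖Φ (z - y) (x - z)‖₊ : ℝ≥0∞) ≤ H₁ (z - y) * H₂ (x - z) := by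
            rw [← enorm_eq_nnnorm, ← ofReal_norm]
            calc ENNReal.ofReal ‖Φ (z - y) (x - z)‖ ≤
                ENNReal.ofReal (|h₁ (z - y)| * |h₂ (x - z)|) :=
                  ENNReal.ofReal_le_ofReal
                    ((hΦ _ _).trans (by rw [← abs_mul]; exact le_abs_self _))
              _ = H₁ (z - y) * H₂ (x - z) := ENNReal.ofReal_mul (abs_nonneg _)
          have ha : (‖u t y‖₊ : ℝ≥0∞) * ‖u t z‖₊ ≤ V y + V z := by
            refine le_trans (mul_le_mul' ?_ ?_) (mul_le_sq_add_sq (U y) (U z))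
            · exact le_iSup (fun t => (‖u t y‖₊ : ℝ≥0∞)) t
            · exact le_iSup (fun t => (‖u t z‖₊ : ℝ≥0∞)) t
          exact mul_le_mul' ha hb
      _ = ∫⁻ y, ∫⁻ z, (V y + V z) * (H₁' (z - y) * H₂' (x - z)) := by
          refine lintegral_congr fun y => lintegral_congr_ae ?_
          have e1 : (fun z => H₁ (z - y)) =ᵐ[volume] fun z => H₁' (z - y) :=
            ae_comp_mp (measurePreserving_sub_right volume y) hH₁ae
          have e2 : (fun z => H₂ (x - z)) =ᵐ[volume] fun z => H₂' (x - z) :=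
            ae_comp_mp (Measure.measurePreserving_sub_left volume x) hH₂ae
          filter_upwards [e1, e2] with z hz1 hz2
          rw [hz1, hz2]
      _ = ∫⁻ y, (V y * K (x - y) + ∫⁻ z, V z * (H₁' (z - y) * H₂' (x - z))) := by
          refine lintegral_congr fun y => ?_
          have e0 : ∀ z : ℝ, (V y + V z) * (H₁' (z - y) * H₂' (x - z)) =
              V y * (H₁' (z - y) * H₂' (x - z)) + V z * (H₁' (z - y) * H₂' (x - z)) :=
            fun z => add_mul _ _ _
          rw [lintegral_congr e0, lintegral_add_left ((hψm x y).const_mul _) _]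
          congr 1
          rw [lintegral_const_mul _ (hψm x y)]
          congr 1
          have e : ∫⁻ s, H₁' ((s + y) - y) * H₂' (x - (s + y)) =
              ∫⁻ z, H₁' (z - y) * H₂' (x - z) :=
            (measurePreserving_add_right volume y).lintegral_comp (hψm x y)
          rw [← e, hKdef]
          refine lintegral_congr fun s => ?_
          rw [add_sub_cancel_right]
          congr 2
          ring
      _ ≤ ∫⁻ y, (V y * K (x - y) + ∫⁻ z, g z * (H₁' (z - y) * H₂' (x - z))) := by
          refine lintegral_mono fun y => add_le_add_right ?_ _
          exact lintegral_mul_le_minorant hgmax (hψm x y)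
            (fun z => ENNReal.mul_ne_top (hH₁'top _) (hH₂'top _))
      _ = (∫⁻ y, V y * K (x - y)) + ∫⁻ y, ∫⁻ z, g z * (H₁' (z - y) * H₂' (x - z)) := by
          refine lintegral_add_right _ ?_
          exact (Measurable.lintegral_prod_right'
            ((hgm.comp measurable_snd).mul
              ((hH₁'m.comp (measurable_snd.sub measurable_fst)).mul
                (hH₂'m.comp (measurable_const.sub measurable_snd)))))
      _ ≤ T₁ x + N₁ * T₂' x := by
          refine add_le_add ?_ (le_of_eq ?_)
          · have e : (fun y => V y * K (x - y)) =ᵐ[volume] fun y => V y * K' (x - y) := by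
              have hc := ae_comp_mp (Measure.measurePreserving_sub_left volume x) hK'K
              filter_upwards [hc] with y hy
              rw [← hy]
            calc ∫⁻ y, V y * K (x - y) = ∫⁻ y, V y * K' (x - y) := lintegral_congr_ae e
              _ ≤ ∫⁻ y, g y * K' (x - y) := lintegral_mul_le_minorant hgmax
                  (hK'm.comp (measurable_const.sub measurable_id)) (fun y => hK'top _)
          · have hunc : Measurable (uncurry fun y z : ℝ =>
                g z * (H₁' (z - y) * H₂' (x - z))) :=
              (hgm.comp measurable_snd).mul
                ((hH₁'m.comp (measurable_snd.sub measurable_fst)).mul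
                  (hH₂'m.comp (measurable_const.sub measurable_snd)))
            rw [lintegral_lintegral_swap hunc.aemeasurable]
            calc ∫⁻ z, ∫⁻ y, g z * (H₁' (z - y) * H₂' (x - z))
                = ∫⁻ z, (g z * H₂' (x - z)) * N₁ := by
                  refine lintegral_congr fun z => ?_
                  have e0 : ∀ y : ℝ, g z * (H₁' (z - y) * H₂' (x - z)) =
                      (g z * H₂' (x - z)) * H₁' (z - y) := fun y => by ring
                  have hm1 : Measurable fun a : ℝ => H₁' (z - a) :=
                    hH₁'m.comp (measurable_const.sub measurable_id)
                  rw [lintegral_congr e0, lintegral_const_mul _ hm1]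
                  congr 1
                  exact (Measure.measurePreserving_sub_left volume z).lintegral_comp hH₁'m
              _ = N₁ * T₂' x := by
                  have hm2 : Measurable fun z : ℝ => g z * H₂' (x - z) :=
                    hgm.mul (hH₂'m.comp (measurable_const.sub measurable_id))
                  rw [lintegral_mul_const _ hm2, mul_comm]
  -- L² norms
  set A : ℝ≥0∞ := ∫⁻ x, U x ^ 4 with hAdef
  set Qg : ℝ≥0∞ := (∫⁻ y, g y ^ 2) ^ ((1:ℝ)/2) with hQgdef
  have hQgA : Qg ≤ A ^ ((1:ℝ)/2) := by
    refine ENNReal.rpow_le_rpow ?_ (by norm_num)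
    refine lintegral_mono fun y => ?_
    calc g y ^ 2 ≤ (U y ^ 2) ^ 2 := pow_le_pow_left' (hgV y) 2
      _ = U y ^ 4 := by ring
  have step1 : (∫⁻ x, T₁ x ^ 2) ^ ((1:ℝ)/2) ≤ N₁ * N₂ * Qg := by
    calc (∫⁻ x, T₁ x ^ 2) ^ ((1:ℝ)/2) ≤ (∫⁻ w, K' w) * Qg := young hgm hK'm
      _ = N₁ * N₂ * Qg := by rw [hK'int]
  have step2 : (∫⁻ x, (N₁ * T₂' x) ^ 2) ^ ((1:ℝ)/2) ≤ N₁ * (N₂ * Qg) := by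
    have e : ∀ x : ℝ, (N₁ * T₂' x) ^ 2 = N₁ ^ 2 * T₂' x ^ 2 := fun x => mul_pow _ _ 2
    rw [lintegral_congr e, lintegral_const_mul _ (hT₂'m.pow_const 2),
      ENNReal.mul_rpow_of_nonneg _ _ (by norm_num), half_sq]
    exact mul_le_mul_right (young hgm hH₂'m) N₁
  -- assembling
  have hA4 : ((A ^ ((1:ℝ)/4)) ^ 2 : ℝ≥0∞) = A ^ ((1:ℝ)/2) := by
    rw [← ENNReal.rpow_natCast (A ^ ((1:ℝ)/4)) 2, ← ENNReal.rpow_mul]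
    norm_num
  have hI₁ : (0:ℝ) ≤ ∫ x, |h₁ x| := integral_nonneg fun x => abs_nonneg _
  have hI₂ : (0:ℝ) ≤ ∫ x, |h₂ x| := integral_nonneg fun x => abs_nonneg _
  have hC : ENNReal.ofReal (2 * (∫ x, |h₁ x|) * (∫ x, |h₂ x|)) = 2 * N₁ * N₂ := by
    rw [ENNReal.ofReal_mul (by positivity), ENNReal.ofReal_mul (by norm_num : (0:ℝ) ≤ 2),
      ENNReal.ofReal_ofNat, hN₁, hN₂]
  calc (∫⁻ x, (⨆ t : ℝ,
        (‖∫ y, ∫ z, u t y * (starRingEnd ℂ) (u t z) * Φ (z - y) (x - z)‖₊ : ℝ≥0∞)) ^ 2) ^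
        ((1:ℝ)/2)
      ≤ (∫⁻ x, (T₁ x + N₁ * T₂' x) ^ 2) ^ ((1:ℝ)/2) :=
        ENNReal.rpow_le_rpow (lintegral_mono fun x => pow_le_pow_left' (key x) 2) (by norm_num)
    _ ≤ (∫⁻ x, T₁ x ^ 2) ^ ((1:ℝ)/2) + (∫⁻ x, (N₁ * T₂' x) ^ 2) ^ ((1:ℝ)/2) :=
        Lp2_add hT₁m (measurable_const.mul hT₂'m)
    _ ≤ N₁ * N₂ * Qg + N₁ * (N₂ * Qg) := add_le_add step1 step2
    _ ≤ N₁ * N₂ * A ^ ((1:ℝ)/2) + N₁ * (N₂ * A ^ ((1:ℝ)/2)) :=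
        add_le_add (mul_le_mul_right hQgA _) (mul_le_mul_right (mul_le_mul_right hQgA _) _)
    _ = ENNReal.ofReal (2 * (∫ x, |h₁ x|) * (∫ x, |h₂ x|)) * (A ^ ((1:ℝ)/4)) ^ 2 := by
        rw [hC, hA4]; ring
end
end
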